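/- Assume the forward spiral condition V_{N+k} = M·T(V_{k−1}) for all k ≥ 1, the backward spiral condition V_{−k} = M⁻¹·T̄(V_{N−k+1}) for all k ≥ 1, the normalization det ρ_j = 1 for j = 0, 1, …, N, that a_j ≠ 0 for all j, and the seed conditions det(V_{N+1}, M·V_1, V_N) = 0 and det(M·V_0, V_N, V_{N−1}) = 0. Set A_j := c_j + a_j·b_{j−1} and assume A_0, A_1, A_2 and c_N + b_N·a_{N−2} are nonzero. Then: (i) c_N = (c_N + b_N·a_{N−2})·c_{N+1}; (ii) c_{−1} = A_0·A_1/c_N; (iii) b_N = (c_N/a_{N−2})·(c_N/(A_1·A_2) − 1); and (iv) a_{−1} = c_{N+1}·a_{N−1}·a_{N−2}·(1 + a_1·b_0)/(c_N·a_0). -/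

import Mathlib

open Matrix

/-- The 3×3 matrix with columns `u, v, w`. -/
def colMat (u v w : Fin 3 → ℝ) : Matrix (Fin 3) (Fin 3) ℝ :=
  Matrix.of fun i j => ![u, v, w] j i

/-- `det(u,v,w)`: determinant of the 3×3 matrix with columns `u, v, w`. -/
def det3 (u v w : Fin 3 → ℝ) : ℝ := (colMat u v w).det


lemma det3_eq (u v w : Fin 3 → ℝ) : det3 u v w =
    u 0 * (v 1 * w 2 - v 2 * w 1) - v 0 * (u 1 * w 2 - u 2 * w 1) + w 0 * (u 1 * v 2 - u 2 * v 1) := by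
  simp [det3, colMat, Matrix.det_fin_three, Matrix.cons_val_zero, Matrix.cons_val_one,
    Matrix.head_cons, Matrix.cons_val_two, Matrix.tail_cons]
  ring

lemma det3_comb3 (u v w : Fin 3 → ℝ) (x1 y1 z1 x2 y2 z2 x3 y3 z3 : ℝ) :
    det3 (x1 • u + y1 • v + z1 • w) (x2 • u + y2 • v + z2 • w) (x3 • u + y3 • v + z3 • w)
      = (x1 * (y2 * z3 - z2 * y3) - y1 * (x2 * z3 - z2 * x3) + z1 * (x2 * y3 - y2 * x3)) *
        det3 u v w := by
  simp only [det3_eq, Pi.add_apply, Pi.smul_apply, smul_eq_mul]; ring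

lemma det3_cc (p q r s : Fin 3 → ℝ) :
    crossProduct (crossProduct p q) (crossProduct r s)
      = det3 p q s • r - det3 p q r • s := by
  funext i
  fin_cases i <;>
    simp [cross_apply, det3_eq, Matrix.cons_val_zero, Matrix.cons_val_one,
      Matrix.head_cons, Matrix.cons_val_two, Matrix.tail_cons] <;> ring

lemma det3_mulVec (M : Matrix (Fin 3) (Fin 3) ℝ) (u v w : Fin 3 → ℝ) :
    det3 (M.mulVec u) (M.mulVec v) (M.mulVec w) = M.det * det3 u v w := by
  have h : colMat (M.mulVec u) (M.mulVec v) (M.mulVec w) = M * colMat u v w := by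
    ext i j
    fin_cases j <;> simp [colMat, Matrix.mul_apply, Matrix.mulVec, dotProduct]
  rw [det3, h, Matrix.det_mul, det3]

lemma det3_addR (u v w w' : Fin 3 → ℝ) : det3 u v (w + w') = det3 u v w + det3 u v w' := by
  simp only [det3_eq, Pi.add_apply]; ring

lemma det3_smulR (r : ℝ) (u v w : Fin 3 → ℝ) : det3 u v (r • w) = r * det3 u v w := by
  simp only [det3_eq, Pi.smul_apply, smul_eq_mul]; ring

lemma det3_addM (u v v' w : Fin 3 → ℝ) : det3 u (v + v') w = det3 u v w + det3 u v' w := by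
  simp only [det3_eq, Pi.add_apply]; ring

lemma det3_smulM (r : ℝ) (u v w : Fin 3 → ℝ) : det3 u (r • v) w = r * det3 u v w := by
  simp only [det3_eq, Pi.smul_apply, smul_eq_mul]; ring

lemma det3_smulL (r : ℝ) (u v w : Fin 3 → ℝ) : det3 (r • u) v w = r * det3 u v w := by
  simp only [det3_eq, Pi.smul_apply, smul_eq_mul]; ring

lemma det3_dup12 (u v : Fin 3 → ℝ) : det3 u u v = 0 := by
  simp only [det3_eq]; ring

lemma det3_dup13 (u v : Fin 3 → ℝ) : det3 u v u = 0 := by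
  simp only [det3_eq]; ring

lemma det3_dup23 (u v : Fin 3 → ℝ) : det3 u v v = 0 := by
  simp only [det3_eq]; ring

lemma det3_cyc (u v w : Fin 3 → ℝ) : det3 u v w = det3 v w u := by
  simp only [det3_eq]; ring

lemma det3_swap23 (u v w : Fin 3 → ℝ) : det3 u w v = -det3 u v w := by
  simp only [det3_eq]; ring

lemma det3_swap13 (u v w : Fin 3 → ℝ) : det3 w v u = -det3 u v w := by
  simp only [det3_eq]; ring

lemma det3_zero1 (v w : Fin 3 → ℝ) : det3 0 v w = 0 := by
  simp only [det3_eq, Pi.zero_apply]; ring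

lemma det3_zero2 (v w : Fin 3 → ℝ) : det3 v 0 w = 0 := by
  simp only [det3_eq, Pi.zero_apply]; ring

lemma det3_zero3 (v w : Fin 3 → ℝ) : det3 v w 0 = 0 := by
  simp only [det3_eq, Pi.zero_apply]; ring

lemma det3_coeff1 (u v w : Fin 3 → ℝ) (x y z : ℝ) :
    det3 (x • u + y • v + z • w) v w = x * det3 u v w := by
  simp only [det3_eq, Pi.add_apply, Pi.smul_apply, smul_eq_mul]; ring

lemma det3_coeff2 (u v w : Fin 3 → ℝ) (x y z : ℝ) :
    det3 u (x • u + y • v + z • w) w = y * det3 u v w := by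
  simp only [det3_eq, Pi.add_apply, Pi.smul_apply, smul_eq_mul]; ring

lemma det3_coeff3 (u v w : Fin 3 → ℝ) (x y z : ℝ) :
    det3 u v (x • u + y • v + z • w) = z * det3 u v w := by
  simp only [det3_eq, Pi.add_apply, Pi.smul_apply, smul_eq_mul]; ring

lemma det3_eval_a (u v w : Fin 3 → ℝ) (x y z : ℝ) :
    det3 (x • u + y • v + z • w) v u = -(z * det3 u v w) := by
  simp only [det3_eq, Pi.add_apply, Pi.smul_apply, smul_eq_mul]; ring

lemma comb_eq_zero {u v w : Fin 3 → ℝ} {x y z : ℝ}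
    (h : x • u + y • v + z • w = 0) (hd : det3 u v w ≠ 0) : x = 0 ∧ y = 0 ∧ z = 0 := by
  refine ⟨?_, ?_, ?_⟩
  · have h1 := det3_coeff1 u v w x y z
    rw [h, det3_zero1] at h1
    exact ((mul_eq_zero.mp h1.symm).resolve_right hd)
  · have h1 := det3_coeff2 u v w x y z
    rw [h, det3_zero2] at h1
    exact ((mul_eq_zero.mp h1.symm).resolve_right hd)
  · have h1 := det3_coeff3 u v w x y z
    rw [h, det3_zero3] at h1
    exact ((mul_eq_zero.mp h1.symm).resolve_right hd)

/-- under the forward and backward spiral conditions, the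
normalization `det ρ_j = 1` for `j = 0, …, N`, `a_j ≠ 0` for all `j`, and the
seed conditions, with `A_j = c_j + a_j·b_{j−1}` and `A₀, A₁, A₂` and
`c_N + b_N·a_{N−2}` nonzero, one has:
(i) `c_N = (c_N + b_N·a_{N−2})·c_{N+1}`; (ii) `c_{−1} = A₀·A₁/c_N`;
(iii) `b_N = (c_N/a_{N−2})·(c_N/(A₁·A₂) − 1)`; and
(iv) `a_{−1} = c_{N+1}·a_{N−1}·a_{N−2}·(1 + a₁·b₀)/(c_N·a₀)`. -/
theorem end_invariants (N : ℕ) (hN : 5 ≤ N)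
    (V : ℤ → Fin 3 → ℝ) (a b c : ℤ → ℝ)
    (hrec : ∀ j : ℤ, V (j + 3) = a j • V (j + 2) + b j • V (j + 1) + c j • V j)
    (ρ : ℤ → Matrix (Fin 3) (Fin 3) ℝ)
    (hρ : ∀ j : ℤ, ρ j = colMat (V j) (V (j + 1)) (V (j + 2)))
    (hρinv : ∀ j : ℤ, IsUnit (ρ j))
    (M : Matrix (Fin 3) (Fin 3) ℝ) (hM : M.det = 1)
    (T : ℤ → Fin 3 → ℝ)
    (hT : ∀ j : ℤ, T j =
      crossProduct (crossProduct (V (j - 1)) (V (j + 1))) (crossProduct (V j) (V (j + 2))))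
    (Tbar : ℤ → Fin 3 → ℝ)
    (hTbar : ∀ j : ℤ, Tbar j =
      c (j + 1) • crossProduct (crossProduct (V j) (V (j + 1)))
        (crossProduct (V (j - 2)) (V (j - 1))))
    (hfwd : ∀ k : ℤ, 1 ≤ k → V ((N : ℤ) + k) = M.mulVec (T (k - 1)))
    (hbwd : ∀ k : ℤ, 1 ≤ k → V (-k) = M⁻¹.mulVec (Tbar ((N : ℤ) - k + 1)))
    (hnorm : ∀ j : ℤ, 0 ≤ j → j ≤ (N : ℤ) → (ρ j).det = 1)
    (ha : ∀ j : ℤ, a j ≠ 0)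
    (hseed1 : det3 (V ((N : ℤ) + 1)) (M.mulVec (V 1)) (V (N : ℤ)) = 0)
    (hseed2 : det3 (M.mulVec (V 0)) (V (N : ℤ)) (V ((N : ℤ) - 1)) = 0)
    (A : ℤ → ℝ) (hA : ∀ j : ℤ, A j = c j + a j * b (j - 1))
    (hA0 : A 0 ≠ 0) (hA1 : A 1 ≠ 0) (hA2 : A 2 ≠ 0)
    (hBN : c (N : ℤ) + b (N : ℤ) * a ((N : ℤ) - 2) ≠ 0) :
    c (N : ℤ) = (c (N : ℤ) + b (N : ℤ) * a ((N : ℤ) - 2)) * c ((N : ℤ) + 1) ∧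
    c (-1) = A 0 * A 1 / c (N : ℤ) ∧
    b (N : ℤ) = (c (N : ℤ) / a ((N : ℤ) - 2)) * (c (N : ℤ) / (A 1 * A 2) - 1) ∧
    a (-1) = c ((N : ℤ) + 1) * a ((N : ℤ) - 1) * a ((N : ℤ) - 2) * (1 + a 1 * b 0) /
      (c (N : ℤ) * a 0) := by
  have hnn : (5:ℤ) ≤ (N:ℤ) := by exact_mod_cast hN
  set n : ℤ := (N:ℤ) with hn
  -- frames have nonzero determinant
  have hd : ∀ j : ℤ, det3 (V j) (V (j+1)) (V (j+2)) ≠ 0 := by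
    intro j
    have h := ((Matrix.isUnit_iff_isUnit_det _).mp (hρinv j)).ne_zero
    rw [hρ j] at h
    exact h
  have hDnorm : ∀ j : ℤ, 0 ≤ j → j ≤ n → det3 (V j) (V (j+1)) (V (j+2)) = 1 := by
    intro j h1 h2
    have h := hnorm j h1 h2
    rw [hρ j] at h
    exact h
  -- determinant recursion
  have hstep : ∀ j : ℤ, det3 (V (j+1)) (V (j+2)) (V (j+3))
      = c j * det3 (V j) (V (j+1)) (V (j+2)) := by
    intro j
    rw [hrec j, det3_addR, det3_addR, det3_smulR, det3_smulR, det3_smulR, det3_dup23,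
      det3_dup13, ← det3_cyc]
    ring
  have hc1 : ∀ j : ℤ, 0 ≤ j → j + 1 ≤ n → c j = 1 := by
    intro j h1 h2
    have h := hstep j
    have e := hDnorm (j+1) (by omega) h2
    simp only [show j+1+1 = j+2 from by ring, show j+1+2 = j+3 from by ring] at e
    rw [e, hDnorm j h1 (by omega), mul_one] at h
    exact h.symm
  have hDN1a : det3 (V (n+1)) (V (n+2)) (V (n+3)) = c n := by
    have h := hstep n
    rw [hDnorm n (by omega) le_rfl, mul_one] at h
    exact h
  have hDN2a : det3 (V (n+2)) (V (n+3)) (V (n+4)) = c (n+1) * c n := by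
    have h := hstep (n+1)
    simp only [show n+1+1 = n+2 from by ring, show n+1+2 = n+3 from by ring,
      show n+1+3 = n+4 from by ring] at h
    rw [hDN1a] at h
    exact h
  have hdm1 : c (-1) * det3 (V (-1)) (V 0) (V 1) = 1 := by
    have h := hstep (-1)
    norm_num at h
    have e := hDnorm 0 le_rfl (by omega)
    norm_num at e
    rw [e] at h
    exact h.symm
  have cN_ne : c n ≠ 0 := by
    have h := hd (n+1)
    simp only [show n+1+1 = n+2 from by ring, show n+1+2 = n+3 from by ring] at h
    rw [hDN1a] at h
    exact h
  have cN1_ne : c (n+1) ≠ 0 := by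
    have h := hd (n+2)
    simp only [show n+2+1 = n+3 from by ring, show n+2+2 = n+4 from by ring] at h
    rw [hDN2a] at h
    exact fun h0 => h (by rw [h0, zero_mul])
  have hMuv : ∀ x : Fin 3 → ℝ, M.mulVec (M⁻¹.mulVec x) = x := by
    intro x
    rw [Matrix.mulVec_mulVec, Matrix.mul_nonsing_inv _ (by rw [hM]; exact isUnit_one),
      Matrix.one_mulVec]
  -- general formula for T
  have hTval : ∀ j : ℤ, T j = det3 (V (j-1)) (V j) (V (j+1)) • V (j+2)
      - (b (j-1) * det3 (V (j-1)) (V j) (V (j+1))) • V j := by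
    intro j
    have hV2 : V (j+2) = a (j-1) • V (j+1) + b (j-1) • V j + c (j-1) • V (j-1) := by
      have h := hrec (j-1)
      simp only [show j-1+3 = j+2 from by ring, show j-1+2 = j+1 from by ring,
        show j-1+1 = j from by ring] at h
      exact h
    have h1 : det3 (V (j-1)) (V (j+1)) (V (j+2))
        = -(b (j-1) * det3 (V (j-1)) (V j) (V (j+1))) := by
      rw [hV2, det3_addR, det3_addR, det3_smulR, det3_smulR, det3_smulR, det3_dup23,
        det3_dup13, det3_swap23]
      ring
    have h2 : det3 (V (j-1)) (V (j+1)) (V j) = -det3 (V (j-1)) (V j) (V (j+1)) :=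
      det3_swap23 _ _ _
    rw [hT j, det3_cc, h1, h2]
    module
  -- forward spiral values
  have hVn1 : V (n+1) = M.mulVec (T 0) := by
    have h := hfwd 1 le_rfl; norm_num at h; exact h
  have hVn2 : V (n+2) = M.mulVec (T 1) := by
    have h := hfwd 2 (by norm_num); norm_num at h; exact h
  have hVn3 : V (n+3) = M.mulVec (T 2) := by
    have h := hfwd 3 (by norm_num); norm_num at h; exact h
  have hVn4 : V (n+4) = M.mulVec (T 3) := by
    have h := hfwd 4 (by norm_num); norm_num at h; exact h
  -- small determinants and recursions
  have hd0 : det3 (V 0) (V 1) (V 2) = 1 := by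
    have e := hDnorm 0 le_rfl (by omega); norm_num at e; exact e
  have hd1 : det3 (V 1) (V 2) (V 3) = 1 := by
    have e := hDnorm 1 (by omega) (by omega); norm_num at e; exact e
  have hd2 : det3 (V 2) (V 3) (V 4) = 1 := by
    have e := hDnorm 2 (by omega) (by omega); norm_num at e; exact e
  have hc0 : c 0 = 1 := hc1 0 le_rfl (by omega)
  have hc11 : c 1 = 1 := hc1 1 (by omega) (by omega)
  have hc22 : c 2 = 1 := hc1 2 (by omega) (by omega)
  have hV3 : V 3 = a 0 • V 2 + b 0 • V 1 + V 0 := by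
    have h := hrec 0; norm_num at h; rw [hc0, one_smul] at h; exact h
  have hV4 : V 4 = a 1 • V 3 + b 1 • V 2 + V 1 := by
    have h := hrec 1; norm_num at h; rw [hc11, one_smul] at h; exact h
  have hV5 : V 5 = a 2 • V 4 + b 2 • V 3 + V 2 := by
    have h := hrec 2; norm_num at h; rw [hc22, one_smul] at h; exact h
  -- explicit T values
  have hT0 : T 0 = det3 (V (-1)) (V 0) (V 1) • V 2
      - (b (-1) * det3 (V (-1)) (V 0) (V 1)) • V 0 := by
    have h := hTval 0; norm_num at h; exact h
  have hT1 : T 1 = V 3 - b 0 • V 1 := by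
    have h := hTval 1; norm_num at h
    rw [hd0] at h; rw [h]; module
  have hT2 : T 2 = a 1 • V 3 + V 1 := by
    have h := hTval 2; norm_num at h
    rw [hd1, hV4] at h; rw [h]; module
  have hT3 : T 3 = a 2 • V 4 + V 2 := by
    have h := hTval 3; norm_num at h
    rw [hd2, hV5] at h; rw [h]; module
  -- value of c n via the forward map (statement (ii) ingredient)
  have e0 : T 0 = (-(b (-1) * det3 (V (-1)) (V 0) (V 1))) • V 0 + (0:ℝ) • V 1
      + det3 (V (-1)) (V 0) (V 1) • V 2 := by rw [hT0]; module
  have e1 : T 1 = (1:ℝ) • V 0 + (0:ℝ) • V 1 + a 0 • V 2 := by rw [hT1, hV3]; module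
  have e2 : T 2 = a 1 • V 0 + (a 1 * b 0 + 1) • V 1 + (a 1 * a 0) • V 2 := by
    rw [hT2, hV3]; module
  have hcN : c n = det3 (V (-1)) (V 0) (V 1) * ((1 + a 0 * b (-1)) * (1 + a 1 * b 0)) := by
    have h : det3 (V (n+1)) (V (n+2)) (V (n+3)) = det3 (T 0) (T 1) (T 2) := by
      rw [hVn1, hVn2, hVn3, det3_mulVec, hM, one_mul]
    rw [hDN1a, e0, e1, e2, det3_comb3, hd0] at h
    rw [h]; ring
  have hcc : c (n+1) * c n = (1 + a 1 * b 0) * (1 + a 2 * b 1) := by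
    have f1 : T 1 = (-(b 0)) • V 1 + (0:ℝ) • V 2 + (1:ℝ) • V 3 := by rw [hT1]; module
    have f2 : T 2 = (1:ℝ) • V 1 + (0:ℝ) • V 2 + a 1 • V 3 := by rw [hT2]; module
    have f3 : T 3 = a 2 • V 1 + (a 2 * b 1 + 1) • V 2 + (a 2 * a 1) • V 3 := by
      rw [hT3, hV4]; module
    have h : det3 (V (n+2)) (V (n+3)) (V (n+4)) = det3 (T 1) (T 2) (T 3) := by
      rw [hVn2, hVn3, hVn4, det3_mulVec, hM, one_mul]
    rw [hDN2a, f1, f2, f3, det3_comb3, hd1] at h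
    rw [h]; ring
  -- backward spiral value
  have hdn1 : det3 (V (n-1)) (V n) (V (n+1)) = 1 := by
    have e := hDnorm (n-1) (by omega) (by omega)
    simp only [show n-1+1 = n from by ring, show n-1+2 = n+1 from by ring] at e
    exact e
  have hdn2 : det3 (V (n-2)) (V (n-1)) (V n) = 1 := by
    have e := hDnorm (n-2) (by omega) (by omega)
    simp only [show n-2+1 = n-1 from by ring, show n-2+2 = n from by ring] at e
    exact e
  have hVn1rec : V (n+1) = a (n-2) • V n + b (n-2) • V (n-1) + V (n-2) := by
    have h := hrec (n-2)
    simp only [show n-2+3 = n+1 from by ring, show n-2+2 = n from by ring,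
      show n-2+1 = n-1 from by ring] at h
    rw [hc1 (n-2) (by omega) (by omega), one_smul] at h
    exact h
  have hMVm1 : M.mulVec (V (-1)) = c (n+1) • (V (n+1) - a (n-2) • V n) := by
    have h := hbwd 1 le_rfl
    simp only [show n - 1 + 1 = n from by ring] at h
    have h2 : M.mulVec (V (-1)) = Tbar n := by rw [h, hMuv]
    rw [h2, hTbar n, det3_cc]
    have g1 : det3 (V n) (V (n+1)) (V (n-1)) = 1 := by rw [← det3_cyc]; exact hdn1
    have g2 : det3 (V n) (V (n+1)) (V (n-2)) = -(b (n-2)) := by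
      rw [hVn1rec, det3_addM, det3_addM, det3_smulM, det3_smulM, det3_dup12, det3_dup23,
        det3_swap13, hdn2]
      ring
    rw [g1, g2, hVn1rec]
    module
  -- the key forward identities
  have hV2rec : V 2 = a (-1) • V 1 + b (-1) • V 0 + c (-1) • V (-1) := by
    have h := hrec (-1); norm_num at h; exact h
  have hstar : V (n+1) = (det3 (V (-1)) (V 0) (V 1) * a (-1)) • M.mulVec (V 1)
      + M.mulVec (V (-1)) := by
    have hT0' : T 0 = (det3 (V (-1)) (V 0) (V 1) * a (-1)) • V 1
        + (det3 (V (-1)) (V 0) (V 1) * c (-1)) • V (-1) := by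
      rw [hT0, hV2rec]; module
    rw [hVn1, hT0', Matrix.mulVec_add, Matrix.mulVec_smul, Matrix.mulVec_smul]
    have hsc : det3 (V (-1)) (V 0) (V 1) * c (-1) = 1 := by linear_combination hdm1
    rw [hsc, one_smul]
  have hE1 : (1 + a 1 * b 0) • M.mulVec (V 1) = V (n+3) - a 1 • V (n+2) := by
    rw [hVn3, hVn2, hT2, hT1, Matrix.mulVec_add, Matrix.mulVec_smul, Matrix.mulVec_sub,
      Matrix.mulVec_smul]
    module
  have key : (1 + a 1 * b 0) • V (n+1)
      = (det3 (V (-1)) (V 0) (V 1) * a (-1)) • (V (n+3) - a 1 • V (n+2))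
        + ((1 + a 1 * b 0) * c (n+1)) • (V (n+1) - a (n-2) • V n) := by
    conv_lhs => rw [hstar, hMVm1]
    rw [← hE1]
    module
  have hVn3rec : V (n+3) = a n • V (n+2) + b n • V (n+1) + c n • V n := hrec n
  rw [hVn3rec] at key
  have key2 := sub_eq_zero.mpr key
  have hzero : ((1 + a 1 * b 0) * (c (n+1) * a (n-2))
        - det3 (V (-1)) (V 0) (V 1) * a (-1) * c n) • V n
      + ((1 + a 1 * b 0) - (1 + a 1 * b 0) * c (n+1)
        - det3 (V (-1)) (V 0) (V 1) * a (-1) * b n) • V (n+1)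
      + (det3 (V (-1)) (V 0) (V 1) * a (-1) * a 1
        - det3 (V (-1)) (V 0) (V 1) * a (-1) * a n) • V (n+2) = 0 := by
    rw [← key2]; module
  have hdnn : det3 (V n) (V (n+1)) (V (n+2)) ≠ 0 := by
    rw [hDnorm n (by omega) le_rfl]; exact one_ne_zero
  obtain ⟨hα, hβ, -⟩ := comb_eq_zero hzero hdnn
  -- seed 2 consequence
  have hMV2 : M.mulVec (V 2) = a (-1) • M.mulVec (V 1) + b (-1) • M.mulVec (V 0)
      + c (-1) • M.mulVec (V (-1)) := by
    rw [hV2rec, Matrix.mulVec_add, Matrix.mulVec_add, Matrix.mulVec_smul, Matrix.mulVec_smul,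
      Matrix.mulVec_smul]
  have hT1b : T 1 = a 0 • V 2 + V 0 := by rw [hT1, hV3]; module
  have h2 : V (n+2) = a 0 • M.mulVec (V 2) + M.mulVec (V 0) := by
    rw [hVn2, hT1b, Matrix.mulVec_add, Matrix.mulVec_smul]
  have hE0 : (1 + a 0 * b (-1)) • M.mulVec (V 0) = V (n+2) - (a 0 * c (-1)) • V (n+1) := by
    rw [h2, hMV2, hstar]
    match_scalars
    all_goals (first
      | ring1
      | linear_combination (a 0 * a (-1)) * hdm1
      | linear_combination (-(a 0 * a (-1))) * hdm1)
  have hVn2rec : V (n+2) = a (n-1) • V (n+1) + b (n-1) • V n + V (n-1) := by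
    have h := hrec (n-1)
    simp only [show n-1+3 = n+2 from by ring, show n-1+2 = n+1 from by ring,
      show n-1+1 = n from by ring] at h
    rw [hc1 (n-1) (by omega) (by omega), one_smul] at h
    exact h
  have han1 : a (n-1) = a 0 * c (-1) := by
    have hs2 : det3 ((1 + a 0 * b (-1)) • M.mulVec (V 0)) (V n) (V (n-1)) = 0 := by
      rw [det3_smulL, hseed2, mul_zero]
    rw [hE0] at hs2
    have harg : V (n+2) - (a 0 * c (-1)) • V (n+1)
        = (1:ℝ) • V (n-1) + b (n-1) • V n + (a (n-1) - a 0 * c (-1)) • V (n+1) := by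
      rw [hVn2rec]; module
    rw [harg, det3_eval_a, hdn1] at hs2
    linarith
  -- rewrite A values
  have hA0' : A 0 = 1 + a 0 * b (-1) := by
    have h := hA 0; norm_num at h; rw [hc0] at h; exact h
  have hA1' : A 1 = 1 + a 1 * b 0 := by
    have h := hA 1; norm_num at h; rw [hc11] at h; exact h
  have hA2' : A 2 = 1 + a 2 * b 1 := by
    have h := hA 2; norm_num at h; rw [hc22] at h; exact h
  have hA1ne : (1 + a 1 * b 0) ≠ 0 := by rw [← hA1']; exact hA1
  have ha0 : a 0 ≠ 0 := ha 0
  have han2 : a (n-2) ≠ 0 := ha (n-2)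
  refine ⟨?_, ?_, ?_, ?_⟩
  · -- (i)
    have h : (1 + a 1 * b 0) * (c n - (c n + b n * a (n-2)) * c (n+1)) = 0 := by
      linear_combination c n * hβ - b n * hα
    rcases mul_eq_zero.mp h with h' | h'
    · exact absurd h' hA1ne
    · linarith
  · -- (ii)
    rw [hA0', hA1']
    field_simp
    linear_combination c (-1) * hcN + ((1 + a 0 * b (-1)) * (1 + a 1 * b 0)) * hdm1
  · -- (iii)
    rw [hA1', hA2']
    have hAA : (1 + a 1 * b 0) * (1 + a 2 * b 1) ≠ 0 := by
      rw [← hcc]; exact mul_ne_zero cN1_ne cN_ne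
    have hE3 : b n * (c (n+1) * a (n-2)) = c n * (1 - c (n+1)) := by
      have h : (1 + a 1 * b 0) * (b n * (c (n+1) * a (n-2)) - c n * (1 - c (n+1))) = 0 := by
        linear_combination b n * hα - c n * hβ
      rcases mul_eq_zero.mp h with h' | h'
      · exact absurd h' hA1ne
      · linarith
    have hA2ne : 1 + a 2 * b 1 ≠ 0 := right_ne_zero_of_mul hAA
    field_simp
    linear_combination c n * hE3 - (b n * a (n-2) + c n) * hcc
  · -- (iv)
    rw [han1]
    field_simp
    linear_combination (-(c (-1))) * hα - (a (-1) * c n) * hdm1
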